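/- (Growth bound for regularized policy iterates.) Under the regularized policy gradient update $p^{t+1}=\arg\min_{p\in\Delta(\mathcal{Y})}[-\langle l^t,p\rangle+\lambda\chi^2(p,\nu)+\tfrac1\eta D(p,p^t)]$ with losses $l^t\in[0,1]^{\mathcal{Y}}$ and initialization $p^1=\nu$, the iterates satisfy $\chi^2(p^t,\nu)\le (t-1)/\lambda$ for all $t\ge 1$. -/

import Mathlib

/-- Growth bound for regularized policy iterates: under the chi-squared–regularized
policy-gradient update with losses in `[0,1]` and `p¹ = ν`, the iterates satisfy
`χ²(pᵗ, ν) ≤ (t-1)/λ`. -/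
theorem chiSq_growth_bound_regularized_iterates
    {Y : Type*} [Fintype Y]
    (ν : Y → ℝ) (hν : ∀ y, 0 < ν y) (hνsum : ∑ y, ν y = 1)
    (T : ℕ) (η lam : ℝ) (hη : 0 < η) (hlam : 0 < lam)
    (l : ℕ → Y → ℝ) (hl : ∀ t ∈ Finset.Icc 1 T, ∀ y, 0 ≤ l t y ∧ l t y ≤ 1)
    (p : ℕ → Y → ℝ)
    (hp1 : p 1 = ν)
    (hsimplex : ∀ t ∈ Finset.Icc 1 (T + 1), (∀ y, 0 ≤ p t y) ∧ ∑ y, p t y = 1)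
    (hupdate : ∀ t ∈ Finset.Icc 1 T, ∀ q : Y → ℝ, (∀ y, 0 ≤ q y) → (∑ y, q y = 1) →
      (-∑ y, l t y * p (t + 1) y) + lam * ∑ y, (p (t + 1) y - ν y) ^ 2 / ν y
          + (1 / η) * ∑ y, (p (t + 1) y - p t y) ^ 2 / ν y
        ≤ (-∑ y, l t y * q y) + lam * ∑ y, (q y - ν y) ^ 2 / ν y
          + (1 / η) * ∑ y, (q y - p t y) ^ 2 / ν y) :
    ∀ t ∈ Finset.Icc 1 (T + 1),
      ∑ y, (p t y - ν y) ^ 2 / ν y ≤ ((t : ℝ) - 1) / lam := by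
  have key : ∀ t : ℕ, 1 ≤ t → t ≤ T + 1 →
      ∑ y, (p t y - ν y) ^ 2 / ν y ≤ ((t : ℝ) - 1) / lam := by
    intro t
    induction t with
    | zero => intro h; omega
    | succ n ih =>
      intro h1 h2
      rcases Nat.eq_or_lt_of_le h1 with heq | hlt
      · -- n + 1 = 1
        have hn : n = 0 := by omega
        subst hn
        simp [hp1]
      · -- n ≥ 1, n ≤ T
        have hn1 : 1 ≤ n := by omega
        have hnT : n ≤ T := by omega
        have hmem : n ∈ Finset.Icc 1 T := Finset.mem_Icc.mpr ⟨hn1, hnT⟩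
        have hsp := hsimplex n (Finset.mem_Icc.mpr ⟨hn1, by omega⟩)
        have hsp' := hsimplex (n+1) (Finset.mem_Icc.mpr ⟨by omega, by omega⟩)
        have hup := hupdate n hmem (p n) hsp.1 hsp.2
        have hD0 : ∑ y, (p n y - p n y) ^ 2 / ν y = 0 := by simp
        rw [hD0, mul_zero, add_zero] at hup
        -- ⟨l n, p (n+1)⟩ ≤ 1
        have hA : ∑ y, l n y * p (n+1) y ≤ 1 := by
          calc ∑ y, l n y * p (n+1) y ≤ ∑ y, p (n+1) y := by
                apply Finset.sum_le_sum
                intro y _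
                nlinarith [(hl n hmem y).1, (hl n hmem y).2, hsp'.1 y]
            _ = 1 := hsp'.2
        have hB : 0 ≤ ∑ y, l n y * p n y := by
          apply Finset.sum_nonneg
          intro y _
          exact mul_nonneg (hl n hmem y).1 (hsp.1 y)
        have hDnn : 0 ≤ ∑ y, (p (n+1) y - p n y) ^ 2 / ν y := by
          apply Finset.sum_nonneg
          intro y _
          exact div_nonneg (sq_nonneg _) (hν y).le
        have hηnn : 0 ≤ (1/η) * ∑ y, (p (n+1) y - p n y) ^ 2 / ν y :=
          mul_nonneg (by positivity) hDnn
        have hstep : lam * ∑ y, (p (n+1) y - ν y) ^ 2 / ν y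
            ≤ lam * ∑ y, (p n y - ν y) ^ 2 / ν y + 1 := by linarith
        have ihn := ih hn1 (by omega)
        have : ∑ y, (p (n+1) y - ν y) ^ 2 / ν y
            ≤ ∑ y, (p n y - ν y) ^ 2 / ν y + 1 / lam := by
          have hc : lam * (1/lam) = 1 := by field_simp
          nlinarith [hstep]
        push_cast
        calc ∑ y, (p (n+1) y - ν y) ^ 2 / ν y
            ≤ ∑ y, (p n y - ν y) ^ 2 / ν y + 1 / lam := this
          _ ≤ ((n : ℝ) - 1) / lam + 1 / lam := by linarith
          _ = ((n : ℝ) + 1 - 1) / lam := by rw [← add_div]; ring_nf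
  intro t ht
  have := Finset.mem_Icc.mp ht
  exact key t this.1 this.2
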